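/- (Convergence of types) Let X_n ⇒ X with X nondegenerate, and suppose a_n > 0, b_n ∈ ℝ are such that a_n X_n + b_n ⇒ Y with Y nondegenerate. Then a_n converges to some a > 0 and b_n converges to some b, and Y has the same distribution as aX + b. -/

import Mathlib

open MeasureTheory ProbabilityTheory Filter

open Set in
/-- The (lower) quantile function associated to a cdf-like function. -/
noncomputable def Qtl (f : ℝ → ℝ) (p : ℝ) : ℝ := sInf {x | p ≤ f x}

section QtlBasic

open Set

variable {f : ℝ → ℝ} {p : ℝ}

lemma Qtl_set_nonempty (h1 : Tendsto f atTop (nhds 1)) (hp1 : p < 1) :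
    {x | p ≤ f x}.Nonempty := by
  obtain ⟨x, hx⟩ := (h1.eventually (eventually_gt_nhds hp1)).exists
  exact ⟨x, hx.le⟩

lemma Qtl_set_bddBelow (hf : Monotone f) (h0 : Tendsto f atBot (nhds 0)) (hp0 : 0 < p) :
    BddBelow {x | p ≤ f x} := by
  obtain ⟨x0, hx0⟩ := (h0.eventually (eventually_lt_nhds hp0)).exists
  refine ⟨x0, fun z hz => ?_⟩
  by_contra h
  push_neg at h
  exact absurd (le_trans hz (hf h.le)) (not_le.2 hx0)

lemma lt_of_lt_Qtl (hf : Monotone f) (h0 : Tendsto f atBot (nhds 0)) (hp0 : 0 < p)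
    {x : ℝ} (hx : x < Qtl f p) : f x < p := by
  by_contra h
  push_neg at h
  exact absurd (csInf_le (Qtl_set_bddBelow hf h0 hp0) h) (not_le.2 hx)

lemma le_of_Qtl_lt (hf : Monotone f) (h1 : Tendsto f atTop (nhds 1)) (hp1 : p < 1)
    {y : ℝ} (hy : Qtl f p < y) : p ≤ f y := by
  obtain ⟨z, hz, hzy⟩ := exists_lt_of_csInf_lt (Qtl_set_nonempty h1 hp1) hy
  exact le_trans hz (hf hzy.le)

lemma le_Qtl_of_lt (hf : Monotone f) (h1 : Tendsto f atTop (nhds 1)) (hp1 : p < 1)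
    {x : ℝ} (hx : f x < p) : x ≤ Qtl f p := by
  refine le_csInf (Qtl_set_nonempty h1 hp1) (fun z hz => ?_)
  by_contra h
  push_neg at h
  exact absurd (le_trans hz (hf h.le)) (not_le.2 hx)

lemma Qtl_mono (hf : Monotone f) (h0 : Tendsto f atBot (nhds 0))
    (h1 : Tendsto f atTop (nhds 1)) {q : ℝ} (hp0 : 0 < p) (hq1 : q < 1) (hpq : p ≤ q) :
    Qtl f p ≤ Qtl f q :=
  csInf_le_csInf (Qtl_set_bddBelow hf h0 hp0) (Qtl_set_nonempty h1 hq1)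
    (fun _ hx => le_trans hpq hx)

end QtlBasic

open Set in
lemma cocountable_meets_Ioo {D : Set ℝ} (hD : D.Countable) {s t : ℝ} (hst : s < t) :
    ∃ x ∈ Ioo s t, x ∉ D := by
  by_contra h
  push_neg at h
  have hsub : Ioo s t ⊆ D := fun x hx => h x hx
  have : (volume : Measure ℝ) (Ioo s t) = 0 :=
    measure_mono_null hsub (hD.measure_zero volume)
  rw [Real.volume_Ioo] at this
  simp only [ENNReal.ofReal_eq_zero, sub_nonpos] at this
  exact absurd this (not_le.2 hst)

section conv

open Set

variable {f : ℕ → ℝ → ℝ} {F : ℝ → ℝ} {C : Set ℝ}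

/-- Quantile convergence from cdf convergence on a cocountable set. -/
lemma Qtl_tendsto (hfm : ∀ n, Monotone (f n)) (hFm : Monotone F)
    (hF0 : Tendsto F atBot (nhds 0)) (hF1 : Tendsto F atTop (nhds 1))
    (hfn1 : ∀ n, Tendsto (f n) atTop (nhds 1)) (hfn0 : ∀ n, Tendsto (f n) atBot (nhds 0))
    (hC : Cᶜ.Countable) (hconv : ∀ x ∈ C, Tendsto (fun n => f n x) atTop (nhds (F x)))
    {p : ℝ} (hp0 : 0 < p) (hp1 : p < 1)
    (hright : ∀ ε > (0:ℝ), ∃ p', p < p' ∧ p' < 1 ∧ Qtl F p' < Qtl F p + ε) :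
    Tendsto (fun n => Qtl (f n) p) atTop (nhds (Qtl F p)) := by
  rw [tendsto_order]
  constructor
  · intro m hm
    obtain ⟨x, hx, hxC⟩ := cocountable_meets_Ioo hC hm
    rw [notMem_compl_iff] at hxC
    have hFx : F x < p := lt_of_lt_Qtl hFm hF0 hp0 hx.2
    filter_upwards [(hconv x hxC).eventually (eventually_lt_nhds hFx)] with n hn
    exact lt_of_lt_of_le hx.1 (le_Qtl_of_lt (hfm n) (hfn1 n) hp1 hn)
  · intro m hm
    obtain ⟨p', hpp', hp'1, hQ'⟩ := hright (m - Qtl F p) (by linarith)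
    obtain ⟨y, hy, hyC⟩ := cocountable_meets_Ioo hC (show Qtl F p' < m by linarith)
    rw [notMem_compl_iff] at hyC
    have hFy : p < F y := lt_of_lt_of_le hpp' (le_of_Qtl_lt hFm hF1 hp'1 hy.1)
    filter_upwards [(hconv y hyC).eventually (eventually_gt_nhds hFy)] with n hn
    exact lt_of_le_of_lt (csInf_le (Qtl_set_bddBelow (hfm n) (hfn0 n) hp0) hn.le) hy.2

/-- If cdf-like functions converge on a cocountable set and `F` is continuous at `y`,
then `f n (yn n) → F y` whenever `yn → y`. -/
lemma tendsto_apply_of_tendsto_of_continuousAt (hfm : ∀ n, Monotone (f n))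
    (hC : Cᶜ.Countable) (hconv : ∀ x ∈ C, Tendsto (fun n => f n x) atTop (nhds (F x)))
    {y : ℝ} (hFy : ContinuousAt F y) {yn : ℕ → ℝ} (hyn : Tendsto yn atTop (nhds y)) :
    Tendsto (fun n => f n (yn n)) atTop (nhds (F y)) := by
  rw [tendsto_order]
  constructor
  · intro m hm
    obtain ⟨l, u, hmem, hsub⟩ := mem_nhds_iff_exists_Ioo_subset.1
      (hFy.eventually (eventually_gt_nhds hm))
    obtain ⟨y', hy', hy'C⟩ := cocountable_meets_Ioo hC (show l < y from hmem.1)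
    rw [notMem_compl_iff] at hy'C
    have hFy' : m < F y' := hsub ⟨hy'.1, lt_trans hy'.2 hmem.2⟩
    filter_upwards [(hconv y' hy'C).eventually (eventually_gt_nhds hFy'),
      hyn.eventually (eventually_gt_nhds hy'.2)] with n h1 h2
    exact lt_of_lt_of_le h1 (hfm n h2.le)
  · intro m hm
    obtain ⟨l, u, hmem, hsub⟩ := mem_nhds_iff_exists_Ioo_subset.1
      (hFy.eventually (eventually_lt_nhds hm))
    obtain ⟨y', hy', hy'C⟩ := cocountable_meets_Ioo hC (show y < u from hmem.2)
    rw [notMem_compl_iff] at hy'C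
    have hFy' : F y' < m := hsub ⟨lt_trans hmem.1 hy'.1, hy'.2⟩
    filter_upwards [(hconv y' hy'C).eventually (eventually_lt_nhds hFy'),
      hyn.eventually (eventually_lt_nhds hy'.1)] with n h1 h2
    exact lt_of_le_of_lt (hfm n h2.le) h1

end conv

section affine

open Set

lemma affine_preimage_Iic {a b y : ℝ} (ha : 0 < a) :
    (fun x => a * x + b) ⁻¹' Iic y = Iic ((y - b) / a) := by
  ext x
  simp only [mem_preimage, mem_Iic, le_div_iff₀ ha]
  constructor <;> intro h <;> linarith

lemma cdf_affine_map (ν : Measure ℝ) [IsProbabilityMeasure ν] {a b : ℝ} (ha : 0 < a) (y : ℝ) :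
    cdf (ν.map (fun x => a * x + b)) y = cdf ν ((y - b) / a) := by
  have hmeas : Measurable (fun x : ℝ => a * x + b) := (measurable_id.const_mul a).add_const b
  have : IsProbabilityMeasure (ν.map (fun x => a * x + b)) :=
    Measure.isProbabilityMeasure_map hmeas.aemeasurable
  rw [cdf_eq_real, cdf_eq_real, measureReal_def, measureReal_def, Measure.map_apply hmeas measurableSet_Iic,
    affine_preimage_Iic ha]

lemma Qtl_affine {f : ℝ → ℝ} (hf : Monotone f) (h0 : Tendsto f atBot (nhds 0))
    (h1 : Tendsto f atTop (nhds 1)) {a b p : ℝ} (ha : 0 < a) (hp0 : 0 < p) (hp1 : p < 1) :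
    Qtl (fun y => f ((y - b) / a)) p = a * Qtl f p + b := by
  have hset : {y | p ≤ f ((y - b) / a)} = (fun x => a * x + b) '' {x | p ≤ f x} := by
    ext y
    simp only [mem_setOf_eq, mem_image]
    constructor
    · intro h
      exact ⟨(y - b) / a, h, by field_simp; ring⟩
    · rintro ⟨x, hx, rfl⟩
      have : (a * x + b - b) / a = x := by field_simp; ring
      rwa [this]
  have hmono : Monotone (fun x : ℝ => a * x + b) :=
    fun x y h => by dsimp; nlinarith
  have hcont : ContinuousAt (fun x : ℝ => a * x + b) (sInf {x | p ≤ f x}) := by fun_prop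
  rw [Qtl, hset, ← Monotone.map_csInf_of_continuousAt hcont hmono
    (Qtl_set_nonempty h1 hp1) (Qtl_set_bddBelow hf h0 hp0)]
  rfl

end affine

section cdfconv

open Set

lemma cdf_continuousAt_singleton_null {ν : Measure ℝ} [IsProbabilityMeasure ν] {x : ℝ}
    (hx : ContinuousAt (cdf ν) x) : ν {x} = 0 := by
  have h1 : Function.leftLim (cdf ν) x = cdf ν x :=
    ((monotone_cdf ν).continuousWithinAt_Iio_iff_leftLim_eq).1 hx.continuousWithinAt
  calc ν {x} = (cdf ν).measure {x} := by rw [measure_cdf]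
  _ = ENNReal.ofReal (cdf ν x - Function.leftLim (cdf ν) x) :=
      StieltjesFunction.measure_singleton _ x
  _ = 0 := by rw [h1, sub_self, ENNReal.ofReal_zero]

lemma cdf_map_tendsto {Ω : Type*} [MeasurableSpace Ω] (μ : Measure Ω) [IsProbabilityMeasure μ]
    {Z : ℕ → Ω → ℝ} {Zl : Ω → ℝ} (hZ : ∀ n, Measurable (Z n)) (hZl : Measurable Zl)
    (hconv : ∀ g : BoundedContinuousFunction ℝ ℝ,
      Tendsto (fun n => ∫ ω, g (Z n ω) ∂μ) atTop (nhds (∫ ω, g (Zl ω) ∂μ)))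
    {x : ℝ} (hx : ContinuousAt (cdf (μ.map Zl)) x) :
    Tendsto (fun n => cdf (μ.map (Z n)) x) atTop (nhds (cdf (μ.map Zl) x)) := by
  have hinst : ∀ n, IsProbabilityMeasure (μ.map (Z n)) :=
    fun n => Measure.isProbabilityMeasure_map (hZ n).aemeasurable
  have hinstl : IsProbabilityMeasure (μ.map Zl) := Measure.isProbabilityMeasure_map hZl.aemeasurable
  set Pn : ℕ → ProbabilityMeasure ℝ := fun n => ⟨μ.map (Z n), hinst n⟩
  set Pl : ProbabilityMeasure ℝ := ⟨μ.map Zl, hinstl⟩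
  have hweak : Tendsto Pn atTop (nhds Pl) := by
    rw [ProbabilityMeasure.tendsto_iff_forall_integral_tendsto]
    intro g
    have h1 : ∀ n, ∫ y, g y ∂(Pn n : Measure ℝ) = ∫ ω, g (Z n ω) ∂μ := fun n =>
      integral_map (hZ n).aemeasurable g.continuous.measurable.aestronglyMeasurable
    have h2 : ∫ y, g y ∂(Pl : Measure ℝ) = ∫ ω, g (Zl ω) ∂μ :=
      integral_map hZl.aemeasurable g.continuous.measurable.aestronglyMeasurable
    simp only [h1, h2]
    exact hconv g
  have hnull : (Pl : Measure ℝ) (frontier (Iic x)) = 0 := by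
    rw [frontier_Iic]
    exact cdf_continuousAt_singleton_null hx
  have key := ProbabilityMeasure.tendsto_measure_of_null_frontier_of_tendsto' hweak hnull
  have key2 := (ENNReal.tendsto_toReal
    (measure_ne_top (Pl : Measure ℝ) (Iic x))).comp key
  have hcdf : ∀ n, cdf (μ.map (Z n)) x = ((Pn n : Measure ℝ) (Iic x)).toReal := fun n =>
    cdf_eq_real _ x
  have hcdfl : cdf (μ.map Zl) x = ((Pl : Measure ℝ) (Iic x)).toReal := cdf_eq_real _ x
  rw [hcdfl]
  exact key2.congr (fun n => (hcdf n).symm)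

end cdfconv

section degenerate

open Set

lemma ae_const_of_Qtl_const (ν : Measure ℝ) [IsProbabilityMeasure ν] {c : ℝ}
    (h : ∀ p ∈ Ioo (0:ℝ) 1, Qtl (cdf ν) p = c) : ν ({c}ᶜ) = 0 := by
  have hm := monotone_cdf ν
  have h0 := tendsto_cdf_atBot ν
  have h1 := tendsto_cdf_atTop ν
  have hlt : ∀ x : ℝ, x < c → ν (Iic x) = 0 := by
    intro x hx
    have hFx : cdf ν x = 0 := by
      refine le_antisymm ?_ (cdf_nonneg ν x)
      by_contra hcon
      push_neg at hcon
      set p := min (cdf ν x) (1/2) with hp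
      have hp0 : 0 < p := lt_min hcon (by norm_num)
      have hp1 : p < 1 := lt_of_le_of_lt (min_le_right _ _) (by norm_num)
      have := lt_of_lt_Qtl hm h0 hp0 (x := x) (by rw [h p ⟨hp0, hp1⟩]; exact hx)
      exact absurd (min_le_left (cdf ν x) (1/2)) (not_le.2 this)
    rw [← ofReal_cdf ν x, hFx, ENNReal.ofReal_zero]
  have hgt : ∀ x : ℝ, c < x → ν (Ioi x) = 0 := by
    intro x hx
    have hFx : cdf ν x = 1 := by
      refine le_antisymm (cdf_le_one ν x) ?_
      by_contra hcon
      push_neg at hcon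
      set p := (max (cdf ν x) 0 + 1) / 2 with hp
      have hmax1 : max (cdf ν x) 0 < 1 := max_lt hcon one_pos
      have hp0 : 0 < p := by
        have : (0:ℝ) ≤ max (cdf ν x) 0 := le_max_right _ _
        rw [hp]; linarith
      have hp1 : p < 1 := by rw [hp]; linarith
      have hple := le_of_Qtl_lt hm h1 hp1 (y := x) (by rw [h p ⟨hp0, hp1⟩]; exact hx)
      have : cdf ν x < p := by
        have : max (cdf ν x) 0 < p := by rw [hp]; linarith
        exact lt_of_le_of_lt (le_max_left _ _) this
      linarith
    have hIic : ν (Iic x) = 1 := by rw [← ofReal_cdf ν x, hFx, ENNReal.ofReal_one]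
    have := measure_compl (measurableSet_Iic (a := x)) (measure_ne_top ν _)
    rw [compl_Iic] at this
    rw [this, hIic, measure_univ, tsub_self]
  have hIio : ν (Iio c) = 0 := by
    have hU : Iio c = ⋃ n : ℕ, Iic (c - 1/(n+1)) := by
      ext x
      simp only [mem_Iio, mem_iUnion, mem_Iic]
      constructor
      · intro hx
        obtain ⟨n, hn⟩ := exists_nat_one_div_lt (show (0:ℝ) < c - x by linarith)
        exact ⟨n, by linarith⟩
      · rintro ⟨n, hn⟩
        have : (0:ℝ) < 1/(n+1) := by positivity
        linarith
    rw [hU]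
    refine measure_iUnion_null fun n => hlt _ ?_
    have : (0:ℝ) < 1/((n:ℝ)+1) := by positivity
    linarith
  have hIoi : ν (Ioi c) = 0 := by
    have hU : Ioi c = ⋃ n : ℕ, Ioi (c + 1/(n+1)) := by
      ext x
      simp only [mem_Ioi, mem_iUnion]
      constructor
      · intro hx
        obtain ⟨n, hn⟩ := exists_nat_one_div_lt (show (0:ℝ) < x - c by linarith)
        exact ⟨n, by linarith⟩
      · rintro ⟨n, hn⟩
        have : (0:ℝ) < 1/(n+1) := by positivity
        linarith
    rw [hU]
    refine measure_iUnion_null fun n => hgt _ ?_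
    have : (0:ℝ) < 1/((n:ℝ)+1) := by positivity
    linarith
  rw [← Iio_union_Ioi]
  exact measure_union_null hIio hIoi

/-- A nondegenerate random variable has a strictly increasing quantile pair. -/
lemma exists_Qtl_lt {Ω : Type*} [MeasurableSpace Ω] (μ : Measure Ω) [IsProbabilityMeasure μ]
    {Z : Ω → ℝ} (hZ : Measurable Z) (hnd : ¬ ∃ r : ℝ, Z =ᵐ[μ] fun _ => r) :
    ∃ u v : ℝ, u ∈ Ioo (0:ℝ) 1 ∧ v ∈ Ioo (0:ℝ) 1 ∧ u < v ∧
      Qtl (cdf (μ.map Z)) u < Qtl (cdf (μ.map Z)) v := by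
  have hinst : IsProbabilityMeasure (μ.map Z) := Measure.isProbabilityMeasure_map hZ.aemeasurable
  by_contra hcon
  push_neg at hcon
  set F := cdf (μ.map Z)
  have hm := monotone_cdf (μ.map Z)
  have h0 := tendsto_cdf_atBot (μ.map Z)
  have h1 := tendsto_cdf_atTop (μ.map Z)
  have hconst : ∀ p ∈ Ioo (0:ℝ) 1, Qtl F p = Qtl F (1/2) := by
    intro p hp
    have hhalf : (1/2 : ℝ) ∈ Ioo (0:ℝ) 1 := by norm_num
    rcases lt_trichotomy p (1/2) with h | h | h
    · exact le_antisymm (Qtl_mono hm h0 h1 hp.1 hhalf.2 h.le)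
        (hcon p (1/2) hp hhalf h)
    · rw [h]
    · exact le_antisymm (hcon (1/2) p hhalf hp h)
        (Qtl_mono hm h0 h1 hhalf.1 hp.2 h.le)
  have hnull := ae_const_of_Qtl_const (μ.map Z) hconst
  refine hnd ⟨Qtl F (1/2), ?_⟩
  have hpre : μ (Z ⁻¹' ({Qtl F (1/2)}ᶜ)) = 0 := by
    rw [← Measure.map_apply hZ (measurableSet_singleton _).compl]
    exact hnull
  have hset : {ω | ¬ Z ω = Qtl F (1/2)} = Z ⁻¹' ({Qtl F (1/2)}ᶜ) := by ext ω; simp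
  rw [Filter.EventuallyEq, ae_iff]
  show μ {x | ¬ Z x = Qtl F (1/2)} = 0
  rw [hset]
  exact hpre

end degenerate

section clamp

open Set

variable {F : ℝ → ℝ} {s t : ℝ}

lemma clamp_mem (hst : s ≤ t) (r : ℝ) : max s (min r t) ∈ Icc s t :=
  ⟨le_max_left _ _, max_le hst (min_le_right _ _)⟩

lemma Qtl_clamp_monotone (hm : Monotone F) (h0 : Tendsto F atBot (nhds 0))
    (h1 : Tendsto F atTop (nhds 1)) (hs : 0 < s) (ht : t < 1) (hst : s ≤ t) :
    Monotone (fun r => Qtl F (max s (min r t))) := by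
  intro r r' hrr'
  exact Qtl_mono hm h0 h1 (lt_of_lt_of_le hs (clamp_mem hst r).1)
    (lt_of_le_of_lt (clamp_mem hst r').2 ht)
    (max_le_max le_rfl (min_le_min hrr' le_rfl))

lemma Qtl_right_cond (ht : t < 1) {r : ℝ} (hr : r ∈ Ioo s t)
    (hcont : ContinuousAt (fun z => Qtl F (max s (min z t))) r) :
    ∀ ε > (0:ℝ), ∃ r', r < r' ∧ r' < 1 ∧ Qtl F r' < Qtl F r + ε := by
  intro ε hε
  rw [Metric.continuousAt_iff] at hcont
  obtain ⟨δ, hδ, hd⟩ := hcont ε hε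
  set r' := min (r + δ/2) ((r + t)/2) with hr'def
  have hrr' : r < r' := lt_min (by linarith) (by have := hr.2; linarith)
  have hr't : r' < t := lt_of_le_of_lt (min_le_right _ _) (by have := hr.2; linarith)
  have hdist : dist r' r < δ := by
    rw [Real.dist_eq, abs_of_nonneg (by linarith)]
    have : r' ≤ r + δ/2 := min_le_left _ _
    linarith
  have := hd hdist
  rw [show s ⊔ r' ⊓ t = r' from by
      simp [min_eq_left hr't.le, max_eq_right (le_of_lt (lt_trans hr.1 hrr'))],
    show s ⊔ r ⊓ t = r from by simp [min_eq_left hr.2.le, max_eq_right hr.1.le],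
    Real.dist_eq, abs_lt] at this
  exact ⟨r', hrr', lt_trans hr't ht, by linarith [this.2]⟩

end clamp

open Set in
/-- Convergence of types: if `X n ⇒ X` with `X` nondegenerate, `a n > 0`, and
`a n • X n + b n ⇒ Y` with `Y` nondegenerate, then `a n → a > 0`, `b n → b`, and
`Y =d a X + b`. -/
theorem convergence_of_types
    {Ω : Type*} [MeasurableSpace Ω] (μ : Measure Ω) [IsProbabilityMeasure μ]
    (X : ℕ → Ω → ℝ) (Xl Y : Ω → ℝ) (a : ℕ → ℝ) (b : ℕ → ℝ)
    (hXmeas : ∀ n, Measurable (X n)) (hXlmeas : Measurable Xl) (hYmeas : Measurable Y)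
    (hapos : ∀ n, 0 < a n)
    (hXconv : ∀ g : BoundedContinuousFunction ℝ ℝ,
      Tendsto (fun n => ∫ ω, g (X n ω) ∂μ) atTop (nhds (∫ ω, g (Xl ω) ∂μ)))
    (hYconv : ∀ g : BoundedContinuousFunction ℝ ℝ,
      Tendsto (fun n => ∫ ω, g (a n * X n ω + b n) ∂μ) atTop (nhds (∫ ω, g (Y ω) ∂μ)))
    (hXnondeg : ¬ ∃ r : ℝ, Xl =ᵐ[μ] fun _ => r)
    (hYnondeg : ¬ ∃ r : ℝ, Y =ᵐ[μ] fun _ => r) :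
    ∃ (a₀ b₀ : ℝ), 0 < a₀ ∧
      Tendsto a atTop (nhds a₀) ∧ Tendsto b atTop (nhds b₀) ∧
      IdentDistrib Y (fun ω => a₀ * Xl ω + b₀) μ μ := by
  have hZmeas : ∀ n, Measurable (fun ω => a n * X n ω + b n) :=
    fun n => ((hXmeas n).const_mul (a n)).add_const (b n)
  haveI hinstXl : IsProbabilityMeasure (μ.map Xl) := Measure.isProbabilityMeasure_map hXlmeas.aemeasurable
  haveI hinstY : IsProbabilityMeasure (μ.map Y) := Measure.isProbabilityMeasure_map hYmeas.aemeasurable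
  have hinstX : ∀ n, IsProbabilityMeasure (μ.map (X n)) :=
    fun n => Measure.isProbabilityMeasure_map (hXmeas n).aemeasurable
  set Fn : ℕ → ℝ → ℝ := fun n => ⇑(cdf (μ.map (X n))) with hFndef
  set Fl : ℝ → ℝ := ⇑(cdf (μ.map Xl)) with hFldef
  set Gn : ℕ → ℝ → ℝ := fun n => ⇑(cdf (μ.map (fun ω => a n * X n ω + b n))) with hGndef
  set Gl : ℝ → ℝ := ⇑(cdf (μ.map Y)) with hGldef
  have hFnm : ∀ n, Monotone (Fn n) := fun n => monotone_cdf _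
  have hFlm : Monotone Fl := monotone_cdf _
  have hGnm : ∀ n, Monotone (Gn n) := fun n => monotone_cdf _
  have hGlm : Monotone Gl := monotone_cdf _
  have hFl0 : Tendsto Fl atBot (nhds 0) := tendsto_cdf_atBot _
  have hFl1 : Tendsto Fl atTop (nhds 1) := tendsto_cdf_atTop _
  have hGl0 : Tendsto Gl atBot (nhds 0) := tendsto_cdf_atBot _
  have hGl1 : Tendsto Gl atTop (nhds 1) := tendsto_cdf_atTop _
  have hFn0 : ∀ n, Tendsto (Fn n) atBot (nhds 0) := fun n => tendsto_cdf_atBot _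
  have hFn1 : ∀ n, Tendsto (Fn n) atTop (nhds 1) := fun n => tendsto_cdf_atTop _
  have hGn0 : ∀ n, Tendsto (Gn n) atBot (nhds 0) := fun n => tendsto_cdf_atBot _
  have hGn1 : ∀ n, Tendsto (Gn n) atTop (nhds 1) := fun n => tendsto_cdf_atTop _
  -- continuity point sets of the limit cdfs
  set CX := {x : ℝ | ContinuousAt Fl x} with hCXdef
  set CY := {x : ℝ | ContinuousAt Gl x} with hCYdef
  have hCX : CXᶜ.Countable := by
    have h := hFlm.countable_not_continuousAt
    have : CXᶜ = {x | ¬ContinuousAt Fl x} := by ext x; simp [hCXdef]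
    rwa [this]
  have hCY : CYᶜ.Countable := by
    have h := hGlm.countable_not_continuousAt
    have : CYᶜ = {x | ¬ContinuousAt Gl x} := by ext x; simp [hCYdef]
    rwa [this]
  have hconvX : ∀ x ∈ CX, Tendsto (fun n => Fn n x) atTop (nhds (Fl x)) :=
    fun x hx => cdf_map_tendsto μ hXmeas hXlmeas hXconv hx
  have hconvY : ∀ x ∈ CY, Tendsto (fun n => Gn n x) atTop (nhds (Gl x)) :=
    fun x hx => cdf_map_tendsto μ hZmeas hYmeas hYconv hx
  -- `Gn` in terms of `Fn` via the affine map
  have hmapZ : ∀ n, μ.map (fun ω => a n * X n ω + b n)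
      = (μ.map (X n)).map (fun x => a n * x + b n) := fun n =>
    (Measure.map_map ((measurable_id.const_mul (a n)).add_const (b n)) (hXmeas n)).symm
  have hGnFn : ∀ n (y : ℝ), Gn n y = Fn n ((y - b n) / a n) := by
    intro n y
    haveI := hinstX n
    show cdf (μ.map (fun ω => a n * X n ω + b n)) y = cdf (μ.map (X n)) ((y - b n) / a n)
    rw [hmapZ n]
    exact cdf_affine_map (μ.map (X n)) (hapos n) y
  have hQGn : ∀ n, ∀ p : ℝ, 0 < p → p < 1 → Qtl (Gn n) p = a n * Qtl (Fn n) p + b n := by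
    intro n p hp0 hp1
    have heq : Gn n = fun y => Fn n ((y - b n) / a n) := funext (hGnFn n)
    rw [heq, Qtl_affine (hFnm n) (hFn0 n) (hFn1 n) (hapos n) hp0 hp1]
  -- nondegeneracy: strictly increasing quantile pairs
  obtain ⟨uX, vX, huX, hvX, huvX, hQuvX⟩ := exists_Qtl_lt μ hXlmeas hXnondeg
  obtain ⟨uY, vY, huY, hvY, huvY, hQuvY⟩ := exists_Qtl_lt μ hYmeas hYnondeg
  rw [← hFldef] at hQuvX
  rw [← hGldef] at hQuvY
  set U := min uX uY with hUdef
  set V := max vX vY with hVdef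
  have hU0 : 0 < U := lt_min huX.1 huY.1
  have hV1 : V < 1 := max_lt hvX.2 hvY.2
  have hUV : U < V := lt_of_le_of_lt (min_le_left _ _) (lt_of_lt_of_le huvX (le_max_left _ _))
  set s := U / 2 with hsdef
  set t := (V + 1) / 2 with htdef
  have hs0 : 0 < s := by rw [hsdef]; linarith
  have hsU : s < U := by rw [hsdef]; linarith
  have hVt : V < t := by rw [htdef]; linarith
  have ht1 : t < 1 := by rw [htdef]; linarith
  have hst : s ≤ t := by rw [hsdef, htdef]; linarith
  -- clamped quantile functions and their discontinuity sets
  set hXc : ℝ → ℝ := fun r => Qtl Fl (max s (min r t)) with hXcdef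
  set hYc : ℝ → ℝ := fun r => Qtl Gl (max s (min r t)) with hYcdef
  have hXcm : Monotone hXc := Qtl_clamp_monotone hFlm hFl0 hFl1 hs0 ht1 hst
  have hYcm : Monotone hYc := Qtl_clamp_monotone hGlm hGl0 hGl1 hs0 ht1 hst
  have hD : ({r | ¬ContinuousAt hXc r} ∪ {r | ¬ContinuousAt hYc r}).Countable :=
    (hXcm.countable_not_continuousAt).union (hYcm.countable_not_continuousAt)
  obtain ⟨p, hpmem, hpD⟩ := cocountable_meets_Ioo hD hsU
  obtain ⟨p', hp'mem, hp'D⟩ := cocountable_meets_Ioo hD hVt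
  simp only [Set.mem_union, Set.mem_setOf_eq, not_or, not_not] at hpD hp'D
  have hpU : p < U := hpmem.2
  have hp'V : V < p' := hp'mem.1
  have hp0 : 0 < p := lt_trans hs0 hpmem.1
  have hp1 : p < 1 := lt_trans (lt_of_lt_of_le hpU (min_le_left _ _)) huX.2
  have hp'0 : 0 < p' := lt_trans (lt_trans hU0 hUV) hp'V
  have hp'1 : p' < 1 := lt_trans hp'mem.2 ht1
  have hpst : p ∈ Ioo s t := ⟨hpmem.1, lt_trans hpU (lt_trans hUV hVt)⟩
  have hp'st : p' ∈ Ioo s t := ⟨lt_trans hsU (lt_trans hUV hp'V), hp'mem.2⟩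
  -- quantile convergences at p, p'
  have htXp : Tendsto (fun n => Qtl (Fn n) p) atTop (nhds (Qtl Fl p)) :=
    Qtl_tendsto hFnm hFlm hFl0 hFl1 hFn1 hFn0 hCX hconvX hp0 hp1
      (Qtl_right_cond ht1 hpst hpD.1)
  have htXp' : Tendsto (fun n => Qtl (Fn n) p') atTop (nhds (Qtl Fl p')) :=
    Qtl_tendsto hFnm hFlm hFl0 hFl1 hFn1 hFn0 hCX hconvX hp'0 hp'1
      (Qtl_right_cond ht1 hp'st hp'D.1)
  have htYp : Tendsto (fun n => a n * Qtl (Fn n) p + b n) atTop (nhds (Qtl Gl p)) :=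
    (Qtl_tendsto hGnm hGlm hGl0 hGl1 hGn1 hGn0 hCY hconvY hp0 hp1
      (Qtl_right_cond ht1 hpst hpD.2)).congr (fun n => hQGn n p hp0 hp1)
  have htYp' : Tendsto (fun n => a n * Qtl (Fn n) p' + b n) atTop (nhds (Qtl Gl p')) :=
    (Qtl_tendsto hGnm hGlm hGl0 hGl1 hGn1 hGn0 hCY hconvY hp'0 hp'1
      (Qtl_right_cond ht1 hp'st hp'D.2)).congr (fun n => hQGn n p' hp'0 hp'1)
  -- strict increases of the limit quantiles
  have hQX : Qtl Fl p < Qtl Fl p' :=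
    lt_of_le_of_lt
      (Qtl_mono hFlm hFl0 hFl1 hp0 huX.2 (le_of_lt (lt_of_lt_of_le hpU (min_le_left _ _))))
      (lt_of_lt_of_le hQuvX
        (Qtl_mono hFlm hFl0 hFl1 hvX.1 hp'1 ((le_max_left _ _).trans hp'V.le)))
  have hQY : Qtl Gl p < Qtl Gl p' :=
    lt_of_le_of_lt
      (Qtl_mono hGlm hGl0 hGl1 hp0 huY.2 (le_of_lt (lt_of_lt_of_le hpU (min_le_right _ _))))
      (lt_of_lt_of_le hQuvY
        (Qtl_mono hGlm hGl0 hGl1 hvY.1 hp'1 ((le_max_right _ _).trans hp'V.le)))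
  set α := (Qtl Gl p' - Qtl Gl p) / (Qtl Fl p' - Qtl Fl p) with hαdef
  have hαpos : 0 < α := div_pos (by linarith) (by linarith)
  -- convergence of a
  have hden : Tendsto (fun n => Qtl (Fn n) p' - Qtl (Fn n) p) atTop
      (nhds (Qtl Fl p' - Qtl Fl p)) := htXp'.sub htXp
  have hnum : Tendsto (fun n => (a n * Qtl (Fn n) p' + b n) - (a n * Qtl (Fn n) p + b n)) atTop
      (nhds (Qtl Gl p' - Qtl Gl p)) := htYp'.sub htYp
  have hquot := hnum.div hden (by linarith : Qtl Fl p' - Qtl Fl p ≠ 0)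
  have ha : Tendsto a atTop (nhds α) := by
    refine hquot.congr' ?_
    filter_upwards [hden.eventually (eventually_gt_nhds (by linarith :
      (0:ℝ) < Qtl Fl p' - Qtl Fl p))] with n hn
    have hne : Qtl (Fn n) p' - Qtl (Fn n) p ≠ 0 := ne_of_gt hn
    show (a n * Qtl (Fn n) p' + b n - (a n * Qtl (Fn n) p + b n)) / (Qtl (Fn n) p' - Qtl (Fn n) p) = a n
    rw [div_eq_iff hne]
    ring
  set β := Qtl Gl p - α * Qtl Fl p with hβdef
  have hb : Tendsto b atTop (nhds β) := by
    have h := htYp.sub (ha.mul htXp)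
    exact h.congr (fun n => by ring)
  refine ⟨α, β, hαpos, ha, hb, ?_⟩
  -- identification of the limit distribution
  have haffmeas : Measurable (fun z : ℝ => α * z + β) := (measurable_id.const_mul α).add_const β
  set CE := {x : ℝ | ContinuousAt Gl x ∧ ContinuousAt Fl ((x - β) / α)} with hCEdef
  have hCE : CEᶜ.Countable := by
    have hsub : CEᶜ ⊆ {x | ¬ContinuousAt Gl x}
        ∪ ((fun z => α * z + β) '' {z | ¬ContinuousAt Fl z}) := by
      intro x hx
      rw [hCEdef, Set.mem_compl_iff, Set.mem_setOf_eq, not_and_or] at hx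
      rcases hx with h | h
      · exact Or.inl h
      · exact Or.inr ⟨(x - β) / α, h, by field_simp; ring⟩
    exact Set.Countable.mono hsub
      ((hGlm.countable_not_continuousAt).union ((hFlm.countable_not_continuousAt).image _))
  have hstep1 : ∀ x ∈ CE, Gl x = Fl ((x - β) / α) := by
    intro x hx
    have hGx : Tendsto (fun n => Gn n x) atTop (nhds (Gl x)) := hconvY x hx.1
    have hyn : Tendsto (fun n => (x - b n) / a n) atTop (nhds ((x - β) / α)) :=
      (tendsto_const_nhds.sub hb).div ha (ne_of_gt hαpos)
    have hFx : Tendsto (fun n => Fn n ((x - b n) / a n)) atTop (nhds (Fl ((x - β) / α))) :=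
      tendsto_apply_of_tendsto_of_continuousAt hFnm hCX hconvX hx.2 hyn
    exact tendsto_nhds_unique (hGx.congr (fun n => hGnFn n x)) hFx
  have hstep2 : ∀ x : ℝ, Gl x = Fl ((x - β) / α) := by
    intro x
    have hchoice : ∀ k : ℕ, ∃ z ∈ Ioo x (x + 1/((k:ℝ)+1)), z ∉ CEᶜ := by
      intro k
      refine cocountable_meets_Ioo hCE ?_
      have : (0:ℝ) < 1/((k:ℝ)+1) := by positivity
      linarith
    choose xk hxk1 hxk2 using hchoice
    have hxkmem : ∀ k, xk k ∈ CE := fun k => Set.notMem_compl_iff.1 (hxk2 k)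
    have hxktend : Tendsto xk atTop (nhds x) := by
      have hub : Tendsto (fun k : ℕ => x + 1/((k:ℝ)+1)) atTop (nhds x) := by
        have h1 := tendsto_one_div_add_atTop_nhds_zero_nat (𝕜 := ℝ)
        have h2 := (tendsto_const_nhds (x := x) (f := (atTop : Filter ℕ))).add h1
        simpa using h2
      exact tendsto_of_tendsto_of_tendsto_of_le_of_le tendsto_const_nhds hub
        (fun k => (hxk1 k).1.le) (fun k => (hxk1 k).2.le)
    have hxkwithin : Tendsto xk atTop (nhdsWithin x (Ici x)) :=
      tendsto_nhdsWithin_iff.2 ⟨hxktend, Filter.Eventually.of_forall (fun k => (hxk1 k).1.le)⟩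
    have hL : Tendsto (fun k => Gl (xk k)) atTop (nhds (Gl x)) :=
      (((cdf (μ.map Y)).right_continuous x).tendsto).comp hxkwithin
    have hyk : Tendsto (fun k => (xk k - β) / α) atTop
        (nhdsWithin ((x - β) / α) (Ici ((x - β) / α))) := by
      refine tendsto_nhdsWithin_iff.2 ⟨?_, Filter.Eventually.of_forall (fun k => ?_)⟩
      · exact (hxktend.sub tendsto_const_nhds).div tendsto_const_nhds (ne_of_gt hαpos)
      · exact Set.mem_Ici.2 ((div_le_div_iff_of_pos_right hαpos).2 (by linarith [(hxk1 k).1]))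
    have hR : Tendsto (fun k => Fl ((xk k - β) / α)) atTop (nhds (Fl ((x - β) / α))) :=
      (((cdf (μ.map Xl)).right_continuous _).tendsto).comp hyk
    exact tendsto_nhds_unique hL (hR.congr (fun k => (hstep1 _ (hxkmem k)).symm))
  -- equality of the distributions
  have hmapeq : μ.map Y = μ.map (fun ω => α * Xl ω + β) := by
    have h2 : μ.map (fun ω => α * Xl ω + β) = (μ.map Xl).map (fun z => α * z + β) :=
      (Measure.map_map haffmeas hXlmeas).symm
    refine Measure.ext_of_Iic (μ.map Y) _ (fun q => ?_)
    rw [h2, Measure.map_apply haffmeas measurableSet_Iic, affine_preimage_Iic hαpos,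
      ← ofReal_cdf (μ.map Xl), ← ofReal_cdf (μ.map Y)]
    exact congrArg ENNReal.ofReal (hstep2 q)
  exact ⟨hYmeas.aemeasurable, ((hXlmeas.const_mul α).add_const β).aemeasurable, hmapeq⟩
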